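/- For every integer p ≥ 2 and all y in (0, π/(2p)), the Chebyshev polynomial of the second kind satisfies (p/6)((1 - p²)y² + 6) < U_{p-1}(cos y) < p - (4/π²)(p - 1/sin(π/(2p)))·p·y². -/

import Mathlib

open Real

lemma aux_nonneg {f f' : ℝ → ℝ} (hd : ∀ x, HasDerivAt f (f' x) x) (h0 : f 0 = 0)
    (hf' : ∀ x, 0 ≤ x → 0 ≤ f' x) {x : ℝ} (hx : 0 ≤ x) : 0 ≤ f x := by
  have hm : MonotoneOn f (Set.Ici 0) :=
    monotoneOn_of_hasDerivWithinAt_nonneg (convex_Ici 0)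
      (fun t _ => (hd t).continuousAt.continuousWithinAt)
      (fun t ht => (hd t).hasDerivWithinAt)
      (fun t ht => hf' t (by rw [interior_Ici] at ht; exact le_of_lt ht))
  have := hm (Set.self_mem_Ici) (Set.mem_Ici.mpr hx) hx
  rwa [h0] at this

lemma sin_ge_a {x : ℝ} (hx : 0 ≤ x) : x - x^3/6 ≤ sin x := by
  have h := aux_nonneg (f := fun t => sin t - (t - t^3/6))
    (f' := fun t => cos t - (1 - t^2/2)) (fun t => by
      have h := (Real.hasDerivAt_sin t).sub ((hasDerivAt_id t).sub ((hasDerivAt_pow 3 t).div_const 6))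
      exact h.congr_deriv (by norm_num; ring))
    (by norm_num)
    (fun t _ => by nlinarith [Real.one_sub_sq_div_two_le_cos (x := t)]) hx
  simpa using by linarith [h]

lemma cos_le_b {x : ℝ} (hx : 0 ≤ x) : cos x ≤ 1 - x^2/2 + x^4/24 := by
  have h := aux_nonneg (f := fun t => (1 - t^2/2 + t^4/24) - cos t)
    (f' := fun t => sin t - (t - t^3/6)) (fun t => by
      have h := ((((hasDerivAt_pow 2 t).div_const 2).const_sub 1).add ((hasDerivAt_pow 4 t).div_const 24)).sub (Real.hasDerivAt_cos t)
      exact h.congr_deriv (by norm_num; ring))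
    (by norm_num)
    (fun t ht => by linarith [sin_ge_a ht]) hx
  simpa using by linarith [h]

lemma sin_le_c {x : ℝ} (hx : 0 ≤ x) : sin x ≤ x - x^3/6 + x^5/120 := by
  have h := aux_nonneg (f := fun t => (t - t^3/6 + t^5/120) - sin t)
    (f' := fun t => (1 - t^2/2 + t^4/24) - cos t) (fun t => by
      have h := (((hasDerivAt_id t).sub ((hasDerivAt_pow 3 t).div_const 6)).add ((hasDerivAt_pow 5 t).div_const 120)).sub (Real.hasDerivAt_sin t)
      exact h.congr_deriv (by norm_num; ring))
    (by norm_num)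
    (fun t ht => by linarith [cos_le_b ht]) hx
  simpa using by linarith [h]

lemma cos_ge_d {x : ℝ} (hx : 0 ≤ x) : 1 - x^2/2 + x^4/24 - x^6/720 ≤ cos x := by
  have h := aux_nonneg (f := fun t => cos t - (1 - t^2/2 + t^4/24 - t^6/720))
    (f' := fun t => (t - t^3/6 + t^5/120) - sin t) (fun t => by
      have h := (Real.hasDerivAt_cos t).sub (((((hasDerivAt_pow 2 t).div_const 2).const_sub 1).add ((hasDerivAt_pow 4 t).div_const 24)).sub ((hasDerivAt_pow 6 t).div_const 720))
      exact h.congr_deriv (by norm_num; ring))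
    (by norm_num)
    (fun t ht => by linarith [sin_le_c ht]) hx
  simpa using by linarith [h]

lemma sin_ge_e {x : ℝ} (hx : 0 ≤ x) : x - x^3/6 + x^5/120 - x^7/5040 ≤ sin x := by
  have h := aux_nonneg (f := fun t => sin t - (t - t^3/6 + t^5/120 - t^7/5040))
    (f' := fun t => cos t - (1 - t^2/2 + t^4/24 - t^6/720)) (fun t => by
      have h := (Real.hasDerivAt_sin t).sub ((((hasDerivAt_id t).sub ((hasDerivAt_pow 3 t).div_const 6)).add ((hasDerivAt_pow 5 t).div_const 120)).sub ((hasDerivAt_pow 7 t).div_const 5040))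
      exact h.congr_deriv (by norm_num; ring))
    (by norm_num)
    (fun t ht => by linarith [cos_ge_d ht]) hx
  simpa using by linarith [h]

set_option maxHeartbeats 1000000 in
theorem stmt_18 (p : ℕ) (hp : 2 ≤ p) (y : ℝ) (hy0 : 0 < y) (hy1 : y < π / (2 * p)) :
    (p : ℝ) / 6 * ((1 - (p : ℝ) ^ 2) * y ^ 2 + 6) <
        (Polynomial.Chebyshev.U ℝ ((p : ℤ) - 1)).eval (cos y) ∧
      (Polynomial.Chebyshev.U ℝ ((p : ℤ) - 1)).eval (cos y) <
        (p : ℝ) - 4 / π ^ 2 * ((p : ℝ) - 1 / sin (π / (2 * p))) * p * y ^ 2 := by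
  set q : ℝ := (p : ℝ) with hqdef
  have hq : (2:ℝ) ≤ q := by rw [hqdef]; exact_mod_cast hp
  have hqpos : (0:ℝ) < q := by linarith
  have hπl : (3.1415:ℝ) < π := by linarith [Real.pi_gt_d6]
  have hπu : π < (3.1416:ℝ) := by linarith [Real.pi_lt_d6]
  have hyq : y * (2*q) < π := (lt_div_iff₀ (by positivity)).mp hy1
  have hyy : 4*q^2*y^2 < 98697/10000 := by
    nlinarith [hyq, mul_pos hy0 hqpos, hπu, pi_pos]
  have hylt : y < π := by nlinarith [hyq, hy0, hq]
  have hsy : 0 < sin y := sin_pos_of_pos_of_lt_pi hy0 hylt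
  -- evaluation of Chebyshev U
  have hU := Polynomial.Chebyshev.U_real_cos y ((p:ℤ)-1)
  have hcast : ((((p:ℤ) - 1 : ℤ) : ℝ) + 1) = q := by push_cast [hqdef]; ring
  rw [hcast] at hU
  have hEv : (Polynomial.Chebyshev.U ℝ ((p:ℤ)-1)).eval (cos y) = sin (q*y) / sin y := by
    rw [eq_div_iff hsy.ne']; exact hU
  rw [hEv]
  have hqy0 : 0 ≤ q * y := by positivity
  constructor
  · -- lower bound
    rw [lt_div_iff₀ hsy]
    have hM : 0 ≤ q / 6 * ((1 - q ^ 2) * y ^ 2 + 6) := by nlinarith [hyy, sq_nonneg y]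
    have h1 : sin y ≤ y - y^3/6 + y^5/120 := sin_le_c hy0.le
    have h2 : q*y - (q*y)^3/6 + (q*y)^5/120 - (q*y)^7/5040 ≤ sin (q*y) := sin_ge_e hqy0
    have hq6 : (0:ℝ) < q^6 - 7*q^2 + 7 := by nlinarith [hq, sq_nonneg (q^2-4), sq_nonneg q]
    have k3 := mul_lt_mul_of_pos_right hyy hq6
    have k2 : (98697/10000:ℝ)*(q^6-7*q^2+7) ≤ 56*q^2*(3*q^4-10*q^2+7) := by
      nlinarith [hq, sq_nonneg q, sq_nonneg (q^2-4), sq_nonneg (q-2), sq_nonneg (q^3-2*q^2)]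
    have keyA : y^2*(q^6-7*q^2+7) < 14*(3*q^4-10*q^2+7) :=
      lt_of_mul_lt_mul_left (a := 4*q^2) (by linarith [k3, k2]) (by positivity)
    have key1 : q / 6 * ((1 - q ^ 2) * y ^ 2 + 6) * (y - y^3/6 + y^5/120)
        < q*y - (q*y)^3/6 + (q*y)^5/120 - (q*y)^7/5040 := by
      have hdiff : (q*y - (q*y)^3/6 + (q*y)^5/120 - (q*y)^7/5040)
          - q / 6 * ((1 - q ^ 2) * y ^ 2 + 6) * (y - y^3/6 + y^5/120)
          = q*y^5/5040 * (14*(3*q^4-10*q^2+7) - y^2*(q^6-7*q^2+7)) := by ring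
      linarith [hdiff, mul_pos (mul_pos hqpos (pow_pos hy0 5)) (sub_pos.mpr keyA)]
    calc q / 6 * ((1 - q ^ 2) * y ^ 2 + 6) * sin y
        ≤ q / 6 * ((1 - q ^ 2) * y ^ 2 + 6) * (y - y^3/6 + y^5/120) :=
          mul_le_mul_of_nonneg_left h1 hM
      _ < q*y - (q*y)^3/6 + (q*y)^5/120 - (q*y)^7/5040 := key1
      _ ≤ sin (q*y) := h2
  · -- upper bound
    rw [div_lt_iff₀ hsy]
    have hx0 : 0 < π/(2*q) := by positivity
    have hxlt : π/(2*q) < π/2 := div_lt_div_of_pos_left pi_pos (by norm_num) (by linarith)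
    have hs0 : 0 < sin (π/(2*q)) := sin_pos_of_pos_of_lt_pi hx0 (by linarith [pi_pos])
    have hslt : sin (π/(2*q)) < π/(2*q) := sin_lt hx0
    have hsgt : 1/q < sin (π/(2*q)) := by
      have h := mul_lt_sin hx0 hxlt
      have he : 2/π * (π/(2*q)) = 1/q := by field_simp
      linarith [he ▸ h]
    set s : ℝ := sin (π/(2*q)) with hsdef
    set C : ℝ := 4 / π ^ 2 * (q - 1 / s) * q with hCdef
    have h1s : 1/s < q := by
      rw [div_lt_iff₀ hs0]
      have h := mul_lt_mul_of_pos_left hsgt hqpos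
      rw [mul_one_div, div_self hqpos.ne'] at h
      linarith
    have hC0 : 0 < C := by
      apply mul_pos (mul_pos (by positivity) _) hqpos
      linarith
    have h2s : 2*q/π < 1/s := by
      have := one_div_lt_one_div_of_lt hs0 hslt
      rwa [one_div_div] at this
    have hπ2 : (9.869:ℝ) < π^2 := by nlinarith [hπl, pi_pos]
    have hπ3 : (31.003:ℝ) < π^3 := by nlinarith [hπ2, hπl, pi_pos]
    have hc : 4*(π-2)/π^3 < 1475/10000 := by
      rw [div_lt_div_iff₀ (by positivity) (by norm_num)]
      nlinarith [hπ3, hπu]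
    have hCu : C < (1475/10000)*q^2 := by
      have step1 : C < 4 / π ^ 2 * (q - 2*q/π) * q := by
        apply mul_lt_mul_of_pos_right _ hqpos
        apply mul_lt_mul_of_pos_left (by linarith) (by positivity)
      have step2 : 4 / π ^ 2 * (q - 2*q/π) * q = 4*(π-2)/π^3 * q^2 := by
        field_simp
      have step3 : 4*(π-2)/π^3 * q^2 < (1475/10000)*q^2 :=
        mul_lt_mul_of_pos_right hc (by positivity)
      linarith [step2 ▸ step1]
    have hqC : 0 < q - C*y^2 := by
      have := mul_lt_mul_of_pos_right hCu (pow_pos hy0 2)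
      nlinarith [this, hyy, hq]
    have h1 : sin (q*y) ≤ q*y - (q*y)^3/6 + (q*y)^5/120 := sin_le_c hqy0
    have hterm : C + y^2*q^5/120 < q*(q^2-1)/6 := by
      have hy2q5 : y^2*q^5 < (98697/10000)/4*q^3 := by
        nlinarith [mul_lt_mul_of_pos_right hyy (pow_pos hqpos 3)]
      nlinarith [hCu, hy2q5, hq, sq_nonneg (q-2)]
    have key2 : q*y - (q*y)^3/6 + (q*y)^5/120 < (q - C*y^2)*(y - y^3/6) := by
      nlinarith [mul_lt_mul_of_pos_left hterm (pow_pos hy0 3), mul_pos (pow_pos hy0 5) hC0]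
    calc sin (q*y) ≤ q*y - (q*y)^3/6 + (q*y)^5/120 := h1
      _ < (q - C*y^2)*(y - y^3/6) := key2
      _ ≤ (q - C*y^2)*sin y := mul_le_mul_of_nonneg_left (sin_ge_a hy0.le) hqC.le
      _ = (q - C*y^2)*sin y := rfl
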